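/- For every finite graph G with lw(G) ≥ 1, pw(G) ≤ lw(G) ≤ pw(G) + 1, i.e., the pathwidth and linearwidth differ by at most one whenever the linearwidth is positive. -/

import Mathlib

variable {V : Type*} [Fintype V] [DecidableEq V]

/-- `Vs F` is the set of endpoints of edges in `F`. -/
def Vs (F : Finset (Sym2 V)) : Finset V :=
  Finset.univ.filter (fun v => ∃ e ∈ F, v ∈ e)

/-- The set of endpoints of a single edge. -/
def eset (e : Sym2 V) : Finset V := Finset.univ.filter (fun v => v ∈ e)

/-- `mids E F` is mid(F) = V(F) ∩ V(E \ F), relative to the edge set `E`. -/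
def mids (E F : Finset (Sym2 V)) : Finset V := Vs F ∩ Vs (E \ F)

/-- `dd E F` is d(F) = |mid(F)|, relative to the edge set `E`. -/
def dd (E F : Finset (Sym2 V)) : ℕ := (mids E F).card

/-- A layout of the edge set `E`: a duplicate-free list enumerating `E`
(equivalently, a bijection {1,…,m} → E). -/
def IsLayout (E : Finset (Sym2 V)) (L : List (Sym2 V)) : Prop :=
  L.Nodup ∧ L.toFinset = E

/-- The (partial) layout `L` has width at most `k` w.r.t. the edge set `E`:
every prefix `π_{≤ i}` satisfies d(π_{≤ i}) ≤ k. -/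
def WidthLE (E : Finset (Sym2 V)) (L : List (Sym2 V)) (k : ℕ) : Prop :=
  ∀ i, dd E (L.take i).toFinset ≤ k

/-- The linearwidth of the edge set `E`: the minimum width of a layout of `E`. -/
noncomputable def lw (E : Finset (Sym2 V)) : ℕ :=
  sInf {k | ∃ L, IsLayout E L ∧ WidthLE E L k}

/-- The number of edges of `S` incident to `u`. -/
def degIn (S : Finset (Sym2 V)) (u : V) : ℕ := (S.filter (fun e => u ∈ e)).card

/-- `X` is a path decomposition of `G`, given as a list of bags. -/
def IsPD (G : SimpleGraph V) (X : List (Finset V)) : Prop :=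
  (∀ v : V, ∃ B ∈ X, v ∈ B) ∧
  (∀ e ∈ G.edgeSet, ∃ B ∈ X, eset e ⊆ B) ∧
  (∀ v : V, ∀ i j l : ℕ, i ≤ j → j ≤ l → l < X.length →
    v ∈ X.getD i ∅ → v ∈ X.getD l ∅ → v ∈ X.getD j ∅)

/-- The pathwidth of `G`: the minimum over path decompositions of (max bag size) − 1. -/
noncomputable def pw (G : SimpleGraph V) : ℕ :=
  sInf {k | ∃ X, IsPD G X ∧ ∀ B ∈ X, B.card ≤ k + 1}

/-- The closure F* of `F` in `E`: all edges of `E` with both endpoints in `V(F)`. -/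
def cl (E F : Finset (Sym2 V)) : Finset (Sym2 V) := E.filter (fun e => eset e ⊆ Vs F)

/-- A partial layout `S` is `k`-extendable: it is a prefix of some layout
of `E` of width at most `k`. -/
def Extendable (E : Finset (Sym2 V)) (k : ℕ) (S : List (Sym2 V)) : Prop :=
  ∃ L, IsLayout E L ∧ WidthLE E L k ∧ S <+: L



-- ## auxiliary lemmas


lemma mem_Vs' {F : Finset (Sym2 V)} {v : V} : v ∈ Vs F ↔ ∃ e ∈ F, v ∈ e := by simp [Vs]

lemma mem_eset' {e : Sym2 V} {v : V} : v ∈ eset e ↔ v ∈ e := by simp [eset]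

lemma mem_mids' {E F : Finset (Sym2 V)} {v : V} :
    v ∈ mids E F ↔ (∃ e ∈ F, v ∈ e) ∧ ∃ f ∈ E \ F, v ∈ f := by
  simp [mids, mem_Vs', Finset.mem_inter]

lemma Vs_mono {F F' : Finset (Sym2 V)} (h : F ⊆ F') : Vs F ⊆ Vs F' := by
  intro v hv
  rw [mem_Vs'] at hv ⊢
  obtain ⟨e, he, hve⟩ := hv
  exact ⟨e, h he, hve⟩

lemma mids_empty (E : Finset (Sym2 V)) : mids E (∅ : Finset (Sym2 V)) = ∅ := by
  ext v; simp [mem_mids']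

lemma perm_toFinset {α} [DecidableEq α] {l l' : List α} (h : l.Perm l') :
    l.toFinset = l'.toFinset := by
  ext a; simp [List.mem_toFinset, h.mem_iff]

lemma eset_pair {a b : V} : eset s(a, b) = {a, b} := by
  ext v; simp [eset, Sym2.mem_iff, Finset.mem_insert]

lemma card_union_eset_le {s : Finset V} {e : Sym2 V} {v : V} (hv : v ∈ e) (hvs : v ∈ s) :
    (s ∪ eset e).card ≤ s.card + 1 := by
  induction e using Sym2.ind with
  | _ x y =>
    rw [eset_pair]
    rcases Sym2.mem_iff.mp hv with rfl | rfl
    · have : s ∪ {v, y} ⊆ insert y s := by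
        intro u hu
        rcases Finset.mem_union.mp hu with hu | hu
        · exact Finset.mem_insert_of_mem hu
        · rcases Finset.mem_insert.mp hu with rfl | hu
          · exact Finset.mem_insert_of_mem hvs
          · rw [Finset.mem_singleton] at hu; subst hu; exact Finset.mem_insert_self _ _
      exact le_trans (Finset.card_le_card this) (Finset.card_insert_le _ _)
    · have : s ∪ {x, v} ⊆ insert x s := by
        intro u hu
        rcases Finset.mem_union.mp hu with hu | hu
        · exact Finset.mem_insert_of_mem hu
        · rcases Finset.mem_insert.mp hu with rfl | hu
          · exact Finset.mem_insert_self _ _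
          · rw [Finset.mem_singleton] at hu; subst hu; exact Finset.mem_insert_of_mem hvs
      exact le_trans (Finset.card_le_card this) (Finset.card_insert_le _ _)

lemma eset_card_le (e : Sym2 V) : (eset e).card ≤ 2 := by
  induction e using Sym2.ind with
  | _ x y =>
    rw [eset_pair]
    exact le_trans (Finset.card_insert_le _ _) (by simp)

lemma dd_le_cardV (E F : Finset (Sym2 V)) : dd E F ≤ Fintype.card V :=
  Finset.card_le_univ _

lemma lw_set_nonempty (E : Finset (Sym2 V)) :
    {k | ∃ L, IsLayout E L ∧ WidthLE E L k}.Nonempty :=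
  ⟨Fintype.card V, E.toList, ⟨Finset.nodup_toList E, Finset.toList_toFinset E⟩,
    fun _ => dd_le_cardV _ _⟩

lemma pw_set_nonempty (G : SimpleGraph V) [DecidableRel G.Adj] :
    {k | ∃ X, IsPD G X ∧ ∀ B ∈ X, B.card ≤ k + 1}.Nonempty := by
  refine ⟨Fintype.card V, [Finset.univ], ⟨fun v => ⟨Finset.univ, by simp⟩,
    fun e _ => ⟨Finset.univ, by simp⟩, ?_⟩, ?_⟩
  · intro v i j l hij hjl hl hi _
    simp only [List.length_singleton] at hl
    have hj : j = 0 := by omega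
    have hi0 : i = 0 := by omega
    subst hj; subst hi0; exact hi
  · intro B hB
    simp only [List.mem_singleton] at hB
    subst hB
    exact le_trans (Finset.card_le_univ _) (Nat.le_succ _)

lemma exists_take_filter {α : Type*} (p : α → Bool) :
    ∀ (l : List α) (m : ℕ), ∃ i, (l.take i).filter p = (l.filter p).take m := by
  intro l
  induction l with
  | nil => intro m; exact ⟨0, by simp⟩
  | cons a l ih =>
    intro m
    cases m with
    | zero => exact ⟨0, by simp⟩
    | succ m =>
      by_cases hpa : p a
      · obtain ⟨i, hi⟩ := ih m
        exact ⟨i + 1, by simp [List.filter_cons, hpa, hi]⟩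
      · obtain ⟨i, hi⟩ := ih (m + 1)
        exact ⟨i + 1, by simp [List.filter_cons, hpa, hi]⟩

lemma lw_le_pw_add_one (G : SimpleGraph V) [DecidableRel G.Adj] :
    lw G.edgeFinset ≤ pw G + 1 := by
  classical
  obtain ⟨X, hPD, hbags⟩ := Nat.sInf_mem (pw_set_nonempty G)
  set E := G.edgeFinset with hE
  set key : Sym2 V → ℕ := fun e => X.findIdx (fun B => decide (eset e ⊆ B)) with hkeydef
  have hkey : ∀ e ∈ E, key e < X.length ∧ eset e ⊆ X.getD (key e) ∅ := by
    intro e he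
    have hex : ∃ B ∈ X, (fun B => decide (eset e ⊆ B)) B = true := by
      obtain ⟨B, hB1, hB2⟩ := hPD.2.1 e (SimpleGraph.mem_edgeFinset.mp he)
      exact ⟨B, hB1, by simpa using hB2⟩
    have hl := List.findIdx_lt_length_of_exists hex
    refine ⟨hl, ?_⟩
    have := List.findIdx_getElem (w := hl)
    rw [List.getD_eq_getElem _ _ hl]
    simpa using this
  set lef : Sym2 V → Sym2 V → Bool := fun a b => decide (key a ≤ key b) with hlef
  set L := (E.toList).mergeSort lef with hLdef
  have hperm : L.Perm E.toList := List.mergeSort_perm _ _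
  have hLfin : L.toFinset = E := by rw [perm_toFinset hperm, Finset.toList_toFinset]
  have hnodup : L.Nodup := hperm.nodup_iff.mpr (Finset.nodup_toList E)
  have hsorted : L.Pairwise (fun a b => lef a b = true) := by
    apply List.pairwise_mergeSort
    · intro a b c; simp only [hlef, decide_eq_true_eq]; omega
    · intro a b; simp only [hlef, Bool.or_eq_true, decide_eq_true_eq]; omega
  apply Nat.sInf_le
  refine ⟨L, ⟨hnodup, hLfin⟩, ?_⟩
  intro i
  by_cases hni : ((L.take i).toFinset : Finset (Sym2 V)).Nonempty
  · set S := (L.take i).toFinset with hS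
    have hSE : S ⊆ E := by
      intro e he
      rw [hS, List.mem_toFinset] at he
      rw [← hLfin, List.mem_toFinset]
      exact List.mem_of_mem_take he
    have hT : (S.image key).Nonempty := hni.image _
    set b := (S.image key).max' hT with hb
    obtain ⟨e₀, he₀S, he₀b⟩ := Finset.mem_image.mp ((S.image key).max'_mem hT)
    have hbX : b < X.length := by rw [hb, ← he₀b]; exact (hkey e₀ (hSE he₀S)).1
    have hmid : mids E S ⊆ X.getD b ∅ := by
      intro v hv
      rw [mem_mids'] at hv
      obtain ⟨⟨e, heS, hve⟩, f, hf, hvf⟩ := hv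
      obtain ⟨hfE, hfS⟩ := Finset.mem_sdiff.mp hf
      have heE := hSE heS
      have h1 : key e ≤ b := by rw [hb]; exact Finset.le_max' _ _ (Finset.mem_image_of_mem key heS)
      have hfL : f ∈ L := by rw [← hLfin, List.mem_toFinset] at hfE; exact hfE
      have hfdrop : f ∈ L.drop i := by
        have h' := hfL
        rw [← List.take_append_drop i L, List.mem_append] at h'
        rcases h' with h' | h'
        · exact absurd (List.mem_toFinset.mpr h') hfS
        · exact h'
      have he₀take : e₀ ∈ L.take i := List.mem_toFinset.mp he₀S
      have h2 : b ≤ key f := by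
        have hs := hsorted
        rw [← List.take_append_drop i L, List.pairwise_append] at hs
        have := hs.2.2 e₀ he₀take f hfdrop
        simp only [hlef, decide_eq_true_eq] at this
        omega
      exact hPD.2.2 v (key e) b (key f) h1 h2 (hkey f hfE).1
        ((hkey e heE).2 (mem_eset'.mpr hve)) ((hkey f hfE).2 (mem_eset'.mpr hvf))
    calc dd E S ≤ (X.getD b ∅).card := Finset.card_le_card hmid
      _ ≤ pw G + 1 := hbags _ (by rw [List.getD_eq_getElem _ _ hbX]; exact List.getElem_mem hbX)
  · rw [Finset.not_nonempty_iff_eq_empty] at hni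
    rw [dd, hni, mids_empty]
    simp

/-- `e` shares a vertex with another edge of `E`. -/
def NIso (E : Finset (Sym2 V)) (e : Sym2 V) : Prop :=
  ∃ f ∈ E, f ≠ e ∧ ∃ v, v ∈ f ∧ v ∈ e

instance (E : Finset (Sym2 V)) : DecidablePred (NIso E) := fun e => by
  unfold NIso; infer_instance

lemma mids_mono_congr {E F F' : Finset (Sym2 V)} (hF : F ⊆ E)
    (h : ∀ e ∈ E, NIso E e → (e ∈ F ↔ e ∈ F')) : mids E F ⊆ mids E F' := by
  intro v hv
  rw [mem_mids'] at hv ⊢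
  obtain ⟨⟨e, heF, hve⟩, f, hf, hvf⟩ := hv
  obtain ⟨hfE, hfF⟩ := Finset.mem_sdiff.mp hf
  have hef : f ≠ e := by rintro rfl; exact hfF heF
  have heE : e ∈ E := hF heF
  have hne : NIso E e := ⟨f, hfE, hef, v, hvf, hve⟩
  have hnf : NIso E f := ⟨e, heE, Ne.symm hef, v, hve, hvf⟩
  exact ⟨⟨e, (h e heE hne).mp heF, hve⟩, f,
    Finset.mem_sdiff.mpr ⟨hfE, fun hc => hfF ((h f hfE hnf).mpr hc)⟩, hvf⟩

lemma mids_congr {E F F' : Finset (Sym2 V)} (hF : F ⊆ E) (hF' : F' ⊆ E)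
    (h : ∀ e ∈ E, NIso E e → (e ∈ F ↔ e ∈ F')) : mids E F = mids E F' :=
  subset_antisymm (mids_mono_congr hF h)
    (mids_mono_congr hF' (fun e he hn => (h e he hn).symm))

lemma nodup_getElem_not_mem_take {α} {l : List α} (h : l.Nodup) {n : ℕ}
    (hn : n < l.length) : l[n] ∉ l.take n := by
  intro hmem
  rw [List.mem_take_iff_getElem] at hmem
  obtain ⟨q, hq, hql⟩ := hmem
  rw [lt_inf_iff] at hq
  exact absurd (h.getElem_inj_iff.mp hql) (by omega)

lemma pw_le_lw (G : SimpleGraph V) [DecidableRel G.Adj] (hk1 : 1 ≤ lw G.edgeFinset) :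
    pw G ≤ lw G.edgeFinset := by
  classical
  set E := G.edgeFinset with hE
  set k := lw E with hk
  obtain ⟨L, ⟨hLnd, hLfin⟩, hLW⟩ := Nat.sInf_mem (lw_set_nonempty E)
  set nb : Sym2 V → Bool := fun e => decide (NIso E e) with hnb
  set A := L.filter (fun e => !(nb e)) with hA
  set B := L.filter nb with hB
  set M := A ++ B with hM
  have hMperm : M.Perm L := by
    have h2 := List.filter_append_perm (fun e => !(nb e)) L
    simp only [Bool.not_not] at h2
    exact h2
  have hMnd : M.Nodup := hMperm.nodup_iff.mpr hLnd
  have hMfin : M.toFinset = E := by rw [perm_toFinset hMperm, hLfin]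
  have hLE : ∀ e ∈ L, e ∈ E := fun e he => hLfin ▸ List.mem_toFinset.mpr he
  have hMlen : M.length = A.length + B.length := List.length_append
  have hAnd : A.Nodup := hLnd.filter _
  have hBnd : B.Nodup := hLnd.filter _
  have hAmem : ∀ e ∈ A, e ∈ E ∧ ¬ NIso E e := by
    intro e he; rw [hA, List.mem_filter] at he
    refine ⟨hLE e he.1, ?_⟩
    simpa [hnb] using he.2
  have hBmem : ∀ e ∈ B, e ∈ E ∧ NIso E e := by
    intro e he; rw [hB, List.mem_filter] at he
    exact ⟨hLE e he.1, by simpa [hnb] using he.2⟩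
  have hEL : ∀ e ∈ E, e ∈ L := fun e he => List.mem_toFinset.mp (hLfin ▸ he)
  have hEB : ∀ e ∈ E, NIso E e → e ∈ B := by
    intro e he hni; rw [hB, List.mem_filter]
    exact ⟨hEL e he, by simpa [hnb] using hni⟩
  have hEA : ∀ e ∈ E, ¬ NIso E e → e ∈ A := by
    intro e he hni; rw [hA, List.mem_filter]
    exact ⟨hEL e he, by simpa [hnb] using hni⟩
  have hMsubE : ∀ e ∈ M, e ∈ E := fun e he => hMfin ▸ List.mem_toFinset.mpr he
  have hPsubE : ∀ i, ((M.take i).toFinset : Finset (Sym2 V)) ⊆ E :=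
    fun i e he => hMsubE e (List.mem_of_mem_take (List.mem_toFinset.mp he))
  -- the reordered layout M has width ≤ k
  have hMW : ∀ i, dd E ((M.take i).toFinset) ≤ k := by
    intro i
    by_cases hic : i ≤ A.length
    · have ht : M.take i = A.take i := by rw [hM]; exact List.take_append_of_le_length hic
      have hemp : mids E ((M.take i).toFinset) = mids E (∅ : Finset (Sym2 V)) := by
        apply mids_congr (hPsubE i) (Finset.empty_subset E)
        intro e heE hni
        simp only [Finset.notMem_empty, iff_false]
        intro heS
        rw [ht, List.mem_toFinset] at heS
        exact (hAmem e (List.mem_of_mem_take heS)).2 hni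
      unfold dd
      rw [hemp, mids_empty]
      simp
    · push_neg at hic
      obtain ⟨i', hi'⟩ := exists_take_filter nb L (i - A.length)
      have ht : M.take i = A ++ B.take (i - A.length) := by
        have h2 := List.take_length_add_append (l₁ := A) (l₂ := B) (i - A.length)
        have h3 : A.length + (i - A.length) = i := by omega
        rw [h3] at h2
        rw [hM]; exact h2
      have hmc : mids E ((M.take i).toFinset) = mids E ((L.take i').toFinset) := by
        apply mids_congr (hPsubE i)
          (fun e he => hLE e (List.mem_of_mem_take (List.mem_toFinset.mp he)))
        intro e heE hni
        have hnbe : nb e = true := by simp [hnb, hni]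
        rw [ht]
        simp only [List.toFinset_append, Finset.mem_union, List.mem_toFinset]
        constructor
        · rintro (heA | heBt)
          · exact absurd hni (hAmem e heA).2
          · rw [← hi', List.mem_filter] at heBt
            exact heBt.1
        · intro heL
          right
          rw [← hi', List.mem_filter]
          exact ⟨heL, hnbe⟩
      unfold dd
      rw [hmc]
      exact hLW i'
  -- the bags
  set W := (Finset.univ \ Vs E).toList with hW
  have hWnd : W.Nodup := Finset.nodup_toList _
  set Y : ℕ → Finset V := fun m =>
    if hm : m < B.length then
      mids E ((M.take (A.length + m)).toFinset) ∪ eset (B[m]) else ∅ with hY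
  set bags := A.map eset ++ ((List.range B.length).map Y ++
    W.map (fun v => ({v} : Finset V))) with hbags
  have hlen : bags.length = A.length + (B.length + W.length) := by simp [hbags]
  have hbag1 : ∀ a (ha : a < A.length), bags.getD a ∅ = eset (A[a]) := by
    intro a ha
    rw [hbags, List.getD_append _ _ _ a (by simpa using ha),
      List.getD_eq_getElem _ _ (by simpa using ha), List.getElem_map]
  have hbag2 : ∀ m (hm : m < B.length), bags.getD (A.length + m) ∅ = Y m := by
    intro m hm
    rw [hbags, List.getD_append_right _ _ _ _ (by simp)]
    simp only [List.length_map, Nat.add_sub_cancel_left]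
    rw [List.getD_append _ _ _ m (by simpa using hm),
      List.getD_eq_getElem _ _ (by simpa using hm), List.getElem_map,
      List.getElem_range]
  have hbag3 : ∀ s (hs : s < W.length) (v : V),
      v ∈ bags.getD (A.length + (B.length + s)) ∅ → W[s] = v := by
    intro s hs v hv
    rw [hbags, List.getD_append_right _ _ _ _ (by simp)] at hv
    simp only [List.length_map, Nat.add_sub_cancel_left] at hv
    rw [List.getD_append_right _ _ _ _ (by simp)] at hv
    simp only [List.length_map, List.length_range, Nat.add_sub_cancel_left] at hv
    rw [List.getD_eq_getElem _ _ (by simpa using hs), List.getElem_map] at hv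
    exact (Finset.mem_singleton.mp hv).symm
  have hYmem : ∀ m (hm : m < B.length) (v : V),
      v ∈ Y m ↔ v ∈ mids E ((M.take (A.length + m)).toFinset) ∨ v ∈ eset (B[m]) := by
    intro m hm v
    rw [hY]
    simp only [dif_pos hm, Finset.mem_union]
  -- prefix descriptions
  have htakeP : ∀ m, m ≤ B.length → M.take (A.length + m) = A ++ B.take m := by
    intro m _
    rw [hM]; exact List.take_length_add_append m
  -- coverage
  have cover : ∀ v : V, ∃ Bg ∈ bags, v ∈ Bg := by
    intro v
    by_cases hv : v ∈ Vs E
    · obtain ⟨e, heE, hve⟩ := mem_Vs'.mp hv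
      have heM : e ∈ M := by rw [← List.mem_toFinset, hMfin]; exact heE
      rcases List.mem_append.mp heM with heA | heB
      · refine ⟨eset e, ?_, mem_eset'.mpr hve⟩
        rw [hbags, List.mem_append]
        exact Or.inl (List.mem_map_of_mem (f := eset) heA)
      · obtain ⟨m, hm, hme⟩ := List.mem_iff_getElem.mp heB
        refine ⟨Y m, ?_, ?_⟩
        · rw [hbags, List.mem_append]
          refine Or.inr (List.mem_append.mpr (Or.inl ?_))
          exact List.mem_map.mpr ⟨m, List.mem_range.mpr hm, rfl⟩
        · rw [hYmem m hm]
          right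
          rw [mem_eset', hme]
          exact hve
    · refine ⟨{v}, ?_, Finset.mem_singleton_self v⟩
      rw [hbags, List.mem_append]
      refine Or.inr (List.mem_append.mpr (Or.inr ?_))
      exact List.mem_map.mpr ⟨v, Finset.mem_toList.mpr
        (Finset.mem_sdiff.mpr ⟨Finset.mem_univ v, hv⟩), rfl⟩
  -- edges covered
  have hedges : ∀ e ∈ G.edgeSet, ∃ Bg ∈ bags, eset e ⊆ Bg := by
    intro e he
    have heE : e ∈ E := SimpleGraph.mem_edgeFinset.mpr he
    have heM : e ∈ M := by rw [← List.mem_toFinset, hMfin]; exact heE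
    rcases List.mem_append.mp heM with heA | heB
    · refine ⟨eset e, ?_, subset_rfl⟩
      rw [hbags, List.mem_append]
      exact Or.inl (List.mem_map_of_mem (f := eset) heA)
    · obtain ⟨m, hm, hme⟩ := List.mem_iff_getElem.mp heB
      refine ⟨Y m, ?_, ?_⟩
      · rw [hbags, List.mem_append]
        refine Or.inr (List.mem_append.mpr (Or.inl ?_))
        exact List.mem_map.mpr ⟨m, List.mem_range.mpr hm, rfl⟩
      · intro u hu
        rw [hYmem m hm]
        right
        rw [hme]
        exact hu
  -- interval property
  have hPD3 : ∀ v i j l, i ≤ j → j ≤ l → l < bags.length →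
      v ∈ bags.getD i ∅ → v ∈ bags.getD l ∅ → v ∈ bags.getD j ∅ := by
    intro v i j l hij hjl hl hvi hvl
    by_cases hvE : v ∈ Vs E
    · by_cases hiso : ∀ e ∈ E, v ∈ e → NIso E e
      · -- case (c): v lies only on non-isolated edges
        have hedgeB : ∀ f ∈ E, v ∈ f → ∃ m, ∃ hm : m < B.length, B[m] = f :=
          fun f hf hvf => List.mem_iff_getElem.mp (hEB f hf (hiso f hf hvf))
        set J : Finset (Fin B.length) :=
          Finset.univ.filter (fun m => v ∈ B[(m : ℕ)]'m.isLt) with hJ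
        have hJmem : ∀ m : Fin B.length, m ∈ J ↔ v ∈ B[(m : ℕ)]'m.isLt := by
          intro m; rw [hJ, Finset.mem_filter]; simp
        have hJne : J.Nonempty := by
          obtain ⟨e, heE, hve⟩ := mem_Vs'.mp hvE
          obtain ⟨m, hm, hme⟩ := hedgeB e heE hve
          exact ⟨⟨m, hm⟩, (hJmem ⟨m, hm⟩).mpr (by rw [hme]; exact hve)⟩
        set m₁ := J.min' hJne with hm₁
        set m₂ := J.max' hJne with hm₂
        have hm₁J := J.min'_mem hJne
        have hm₂J := J.max'_mem hJne
        -- membership in prefix vertex sets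
        have c1 : ∀ m, m < B.length →
            (v ∈ Vs ((M.take (A.length + m)).toFinset) ↔ (m₁ : ℕ) < m) := by
          intro m hm
          rw [htakeP m (le_of_lt hm)]
          constructor
          · intro hvv
            obtain ⟨e', he', hve'⟩ := mem_Vs'.mp hvv
            rw [List.toFinset_append, Finset.mem_union, List.mem_toFinset,
              List.mem_toFinset] at he'
            rcases he' with he' | he'
            · exact absurd (hiso e' (hAmem e' he').1 hve') (hAmem e' he').2
            · rw [List.mem_take_iff_getElem] at he'
              obtain ⟨q, hq, hqe⟩ := he'
              rw [lt_inf_iff] at hq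
              have hqJ : (⟨q, hq.2⟩ : Fin B.length) ∈ J :=
                (hJmem _).mpr (by rw [hqe]; exact hve')
              have h5 := Fin.le_def.mp (J.min'_le _ hqJ)
              have h6 : ((⟨q, hq.2⟩ : Fin B.length) : ℕ) = q := rfl
              rw [h6] at h5
              omega
          · intro hlt
            rw [mem_Vs']
            refine ⟨B[(m₁ : ℕ)]'m₁.isLt, ?_, (hJmem m₁).mp hm₁J⟩
            rw [List.toFinset_append, Finset.mem_union]
            right
            rw [List.mem_toFinset, List.mem_take_iff_getElem]
            exact ⟨(m₁ : ℕ), lt_inf_iff.mpr ⟨hlt, m₁.isLt⟩, rfl⟩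
        have c2 : ∀ m, m < B.length →
            (v ∈ Vs (E \ (M.take (A.length + m)).toFinset) ↔ m ≤ (m₂ : ℕ)) := by
          intro m hm
          constructor
          · intro hvv
            obtain ⟨f, hf, hvf⟩ := mem_Vs'.mp hvv
            obtain ⟨hfE, hfP⟩ := Finset.mem_sdiff.mp hf
            obtain ⟨q, hq, hqf⟩ := hedgeB f hfE hvf
            have hqJ : (⟨q, hq⟩ : Fin B.length) ∈ J :=
              (hJmem _).mpr (by rw [hqf]; exact hvf)
            have hq2 := Fin.le_def.mp (J.le_max' _ hqJ)
            have h6 : ((⟨q, hq⟩ : Fin B.length) : ℕ) = q := rfl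
            rw [h6] at hq2
            by_contra hcon
            push_neg at hcon
            -- then q < m (since m > m₂ ≥ q), so f is in the prefix
            apply hfP
            rw [htakeP m (le_of_lt hm), List.toFinset_append, Finset.mem_union]
            right
            rw [List.mem_toFinset, List.mem_take_iff_getElem]
            exact ⟨q, lt_inf_iff.mpr ⟨by omega, hq⟩, hqf⟩
          · intro hle
            rw [mem_Vs']
            refine ⟨B[(m₂ : ℕ)]'m₂.isLt, ?_, (hJmem m₂).mp hm₂J⟩
            rw [Finset.mem_sdiff]
            constructor
            · exact (hBmem _ (List.getElem_mem m₂.isLt)).1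
            · intro hc
              rw [htakeP m (le_of_lt hm), List.toFinset_append, Finset.mem_union,
                List.mem_toFinset, List.mem_toFinset] at hc
              rcases hc with hc | hc
              · exact (hAmem _ hc).2 (hBmem _ (List.getElem_mem m₂.isLt)).2
              · rw [List.mem_take_iff_getElem] at hc
                obtain ⟨q, hq, hqe⟩ := hc
                rw [lt_inf_iff] at hq
                have := hBnd.getElem_inj_iff.mp hqe
                omega
        have cY : ∀ m (hm : m < B.length),
            (v ∈ Y m ↔ (m₁ : ℕ) ≤ m ∧ m ≤ (m₂ : ℕ)) := by
          intro m hm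
          rw [hYmem m hm]
          constructor
          · rintro (hv | hv)
            · have h1 := hv
              rw [mids, Finset.mem_inter] at h1
              exact ⟨le_of_lt ((c1 m hm).mp h1.1), (c2 m hm).mp h1.2⟩
            · have hmJ : (⟨m, hm⟩ : Fin B.length) ∈ J :=
                (hJmem _).mpr (mem_eset'.mp hv)
              exact ⟨Fin.le_def.mp (J.min'_le _ hmJ), Fin.le_def.mp (J.le_max' _ hmJ)⟩
          · rintro ⟨h1, h2⟩
            by_cases hmm : (m₁ : ℕ) = m
            · right
              rw [mem_eset']
              have : (⟨m, hm⟩ : Fin B.length) = m₁ := by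
                apply Fin.ext; simp [hmm.symm]
              have h7 := (hJmem m₁).mp hm₁J
              rw [← this] at h7
              exact h7
            · left
              rw [mids, Finset.mem_inter]
              exact ⟨(c1 m hm).mpr (by omega), (c2 m hm).mpr h2⟩
        have claimIdx : ∀ idx, idx < bags.length → v ∈ bags.getD idx ∅ →
            A.length + (m₁ : ℕ) ≤ idx ∧ idx ≤ A.length + (m₂ : ℕ) := by
          intro idx hidx hvb
          rcases lt_or_ge idx A.length with h1 | h1
          · rw [hbag1 idx h1, mem_eset'] at hvb
            have := (hAmem _ (List.getElem_mem h1)).1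
            exact absurd (hiso _ this hvb) (hAmem _ (List.getElem_mem h1)).2
          rcases lt_or_ge idx (A.length + B.length) with h2 | h2
          · obtain ⟨m, rfl⟩ : ∃ m, idx = A.length + m := ⟨idx - A.length, by omega⟩
            have hm : m < B.length := by omega
            rw [hbag2 m hm] at hvb
            have := (cY m hm).mp hvb
            omega
          · exfalso
            obtain ⟨s, rfl⟩ : ∃ s, idx = A.length + (B.length + s) :=
              ⟨idx - A.length - B.length, by omega⟩
            have hs : s < W.length := by rw [hlen] at hidx; omega
            have hWs := List.getElem_mem hs
            rw [hbag3 s hs v hvb] at hWs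
            rw [hW, Finset.mem_toList, Finset.mem_sdiff] at hWs
            exact hWs.2 hvE
        have hi' := claimIdx i (by omega) hvi
        have hl' := claimIdx l hl hvl
        have hm : j - A.length < B.length := by have := m₂.isLt; omega
        rw [show j = A.length + (j - A.length) by omega, hbag2 _ hm]
        exact (cY _ hm).mpr ⟨by omega, by omega⟩
      · -- case (b): v lies on an isolated edge
        push_neg at hiso
        obtain ⟨e₀, he₀E, hve₀, hniso₀⟩ := hiso
        have hunique : ∀ f ∈ E, v ∈ f → f = e₀ := by
          intro f hf hvf
          by_contra hne
          exact hniso₀ ⟨f, hf, hne, v, hvf, hve₀⟩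
        obtain ⟨a₀, ha₀, ha₀e⟩ := List.mem_iff_getElem.mp (hEA e₀ he₀E hniso₀)
        have claimIdx : ∀ idx, idx < bags.length → v ∈ bags.getD idx ∅ → idx = a₀ := by
          intro idx hidx hvb
          rcases lt_or_ge idx A.length with h1 | h1
          · rw [hbag1 idx h1, mem_eset'] at hvb
            have heq : A[idx] = e₀ := hunique _ (hAmem _ (List.getElem_mem h1)).1 hvb
            rw [← ha₀e] at heq
            exact hAnd.getElem_inj_iff.mp heq
          rcases lt_or_ge idx (A.length + B.length) with h2 | h2
          · exfalso
            obtain ⟨m, rfl⟩ : ∃ m, idx = A.length + m := ⟨idx - A.length, by omega⟩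
            have hm : m < B.length := by omega
            rw [hbag2 m hm, hYmem m hm] at hvb
            rcases hvb with hvb | hvb
            · rw [mem_mids'] at hvb
              obtain ⟨⟨e, heP, hve⟩, f, hf, hvf⟩ := hvb
              obtain ⟨hfE, hfP⟩ := Finset.mem_sdiff.mp hf
              have he1 : e = e₀ := hunique e (hPsubE _ heP) hve
              have hf1 : f = e₀ := hunique f hfE hvf
              rw [he1, ← hf1] at heP
              exact hfP heP
            · rw [mem_eset'] at hvb
              have hBE := hBmem _ (List.getElem_mem hm)
              have := hunique _ hBE.1 hvb
              rw [this] at hBE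
              exact hniso₀ hBE.2
          · exfalso
            obtain ⟨s, rfl⟩ : ∃ s, idx = A.length + (B.length + s) :=
              ⟨idx - A.length - B.length, by omega⟩
            have hs : s < W.length := by rw [hlen] at hidx; omega
            have hWs := List.getElem_mem hs
            rw [hbag3 s hs v hvb] at hWs
            rw [hW, Finset.mem_toList, Finset.mem_sdiff] at hWs
            exact hWs.2 hvE
        have hi' := claimIdx i (by omega) hvi
        have hl' := claimIdx l hl hvl
        have : j = i := by omega
        rw [this]
        exact hvi
    · -- case (a): isolated vertex, only in its own trailing singleton bag
      have claimIdx : ∀ idx, idx < bags.length → v ∈ bags.getD idx ∅ →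
          ∃ s, ∃ hs : s < W.length, idx = A.length + (B.length + s) ∧ W[s] = v := by
        intro idx hidx hvb
        rcases lt_or_ge idx A.length with h1 | h1
        · exfalso
          rw [hbag1 idx h1, mem_eset'] at hvb
          exact hvE (mem_Vs'.mpr ⟨A[idx], (hAmem _ (List.getElem_mem h1)).1, hvb⟩)
        rcases lt_or_ge idx (A.length + B.length) with h2 | h2
        · exfalso
          obtain ⟨m, rfl⟩ : ∃ m, idx = A.length + m := ⟨idx - A.length, by omega⟩
          have hm : m < B.length := by omega
          rw [hbag2 m hm, hYmem m hm] at hvb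
          rcases hvb with hvb | hvb
          · rw [mem_mids'] at hvb
            obtain ⟨_, f, hf, hvf⟩ := hvb
            exact hvE (mem_Vs'.mpr ⟨f, (Finset.mem_sdiff.mp hf).1, hvf⟩)
          · rw [mem_eset'] at hvb
            exact hvE (mem_Vs'.mpr ⟨B[m], (hBmem _ (List.getElem_mem hm)).1, hvb⟩)
        · obtain ⟨s, rfl⟩ : ∃ s, idx = A.length + (B.length + s) :=
            ⟨idx - A.length - B.length, by omega⟩
          have hs : s < W.length := by rw [hlen] at hidx; omega
          exact ⟨s, hs, rfl, hbag3 s hs v hvb⟩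
      obtain ⟨s₁, hs₁, rfl, hW₁⟩ := claimIdx i (by omega) hvi
      obtain ⟨s₂, hs₂, hl2, hW₂⟩ := claimIdx l hl hvl
      have : s₁ = s₂ := hWnd.getElem_inj_iff.mp (by rw [hW₁, hW₂])
      have hji : j = A.length + (B.length + s₁) := by omega
      rw [hji]
      exact hvi
  -- bag sizes
  have hsize : ∀ Bg ∈ bags, Bg.card ≤ k + 1 := by
    intro Bg hBg
    rw [hbags, List.mem_append] at hBg
    rcases hBg with hBg | hBg
    · obtain ⟨e, _, rfl⟩ := List.mem_map.mp hBg
      exact le_trans (eset_card_le e) (by omega)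
    rw [List.mem_append] at hBg
    rcases hBg with hBg | hBg
    · obtain ⟨m, hmr, rfl⟩ := List.mem_map.mp hBg
      have hm : m < B.length := List.mem_range.mp hmr
      rw [hY]
      simp only [dif_pos hm]
      obtain ⟨heE, hni⟩ := hBmem (B[m]) (List.getElem_mem hm)
      obtain ⟨f, hfE, hfne, u, huf, hue⟩ := hni
      have hcm : A.length + m < M.length := by rw [hMlen]; omega
      have heM : M[A.length + m]'hcm = B[m] := by
        rw [List.getElem_append_right (by omega)]
        simp
      have heP0 : B[m] ∉ ((M.take (A.length + m)).toFinset : Finset (Sym2 V)) := by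
        intro hc
        have h3 := nodup_getElem_not_mem_take hMnd hcm
        rw [heM] at h3
        exact h3 (List.mem_toFinset.mp hc)
      have heP1 : B[m] ∈ ((M.take (A.length + m + 1)).toFinset : Finset (Sym2 V)) := by
        rw [List.mem_toFinset, List.mem_take_iff_getElem]
        exact ⟨A.length + m, lt_inf_iff.mpr ⟨by omega, hcm⟩, heM⟩
      have hP01 : ((M.take (A.length + m)).toFinset : Finset (Sym2 V)) ⊆
          (M.take (A.length + m + 1)).toFinset := by
        intro g hg
        rw [List.mem_toFinset, List.mem_take_iff_getElem] at hg ⊢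
        obtain ⟨q, hq, hqg⟩ := hg
        rw [lt_inf_iff] at hq
        exact ⟨q, lt_inf_iff.mpr ⟨by omega, hq.2⟩, hqg⟩
      have hP1cases : ∀ g, g ∈ ((M.take (A.length + m + 1)).toFinset : Finset (Sym2 V)) →
          g ∈ ((M.take (A.length + m)).toFinset : Finset (Sym2 V)) ∨ g = B[m] := by
        intro g hg
        rw [List.mem_toFinset, List.mem_take_iff_getElem] at hg
        obtain ⟨q, hq, hqg⟩ := hg
        rw [lt_inf_iff] at hq
        rcases lt_or_ge q (A.length + m) with h3 | h3
        · left
          rw [List.mem_toFinset, List.mem_take_iff_getElem]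
          exact ⟨q, lt_inf_iff.mpr ⟨h3, hq.2⟩, hqg⟩
        · right
          have hq4 : q = A.length + m := by omega
          subst hq4
          rw [heM] at hqg
          exact hqg.symm
      by_cases hfP : f ∈ ((M.take (A.length + m)).toFinset : Finset (Sym2 V))
      · have hu0 : u ∈ mids E ((M.take (A.length + m)).toFinset) :=
          mem_mids'.mpr ⟨⟨f, hfP, huf⟩, B[m], Finset.mem_sdiff.mpr ⟨heE, heP0⟩, hue⟩
        calc (mids E ((M.take (A.length + m)).toFinset) ∪ eset (B[m])).card
            ≤ (mids E ((M.take (A.length + m)).toFinset)).card + 1 :=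
              card_union_eset_le hue hu0
          _ ≤ k + 1 := Nat.add_le_add_right (hMW (A.length + m)) 1
      · have hu1 : u ∈ mids E ((M.take (A.length + m + 1)).toFinset) := by
          refine mem_mids'.mpr ⟨⟨B[m], heP1, hue⟩, f, Finset.mem_sdiff.mpr ⟨hfE, ?_⟩, huf⟩
          intro hc
          rcases hP1cases f hc with h3 | h3
          · exact hfP h3
          · exact hfne h3
        have hsub : mids E ((M.take (A.length + m)).toFinset) ∪ eset (B[m]) ⊆
            mids E ((M.take (A.length + m + 1)).toFinset) ∪ eset (B[m]) := by
          intro x hx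
          rcases Finset.mem_union.mp hx with hx | hx
          · by_cases hxe : x ∈ eset (B[m])
            · exact Finset.mem_union_right _ hxe
            · obtain ⟨⟨g₁, hg₁, hxg₁⟩, g₂, hg₂, hxg₂⟩ := mem_mids'.mp hx
              obtain ⟨hg₂E, hg₂P⟩ := Finset.mem_sdiff.mp hg₂
              refine Finset.mem_union_left _ (mem_mids'.mpr
                ⟨⟨g₁, hP01 hg₁, hxg₁⟩, g₂, Finset.mem_sdiff.mpr ⟨hg₂E, fun hc => ?_⟩, hxg₂⟩)
              rcases hP1cases g₂ hc with h3 | h3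
              · exact hg₂P h3
              · subst h3
                exact hxe (mem_eset'.mpr hxg₂)
          · exact Finset.mem_union_right _ hx
        calc (mids E ((M.take (A.length + m)).toFinset) ∪ eset (B[m])).card
            ≤ (mids E ((M.take (A.length + m + 1)).toFinset) ∪ eset (B[m])).card :=
              Finset.card_le_card hsub
          _ ≤ (mids E ((M.take (A.length + m + 1)).toFinset)).card + 1 :=
              card_union_eset_le hue hu1
          _ ≤ k + 1 := Nat.add_le_add_right (hMW (A.length + m + 1)) 1
    · obtain ⟨w, _, rfl⟩ := List.mem_map.mp hBg
      rw [Finset.card_singleton]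
      omega
  exact Nat.sInf_le ⟨bags, ⟨cover, hedges, hPD3⟩, hsize⟩


/-- For every graph with lw(G) ≥ 1, pw(G) ≤ lw(G) ≤ pw(G) + 1. -/
theorem stmt8 (G : SimpleGraph V) [DecidableRel G.Adj]
    (h : 1 ≤ lw G.edgeFinset) :
    pw G ≤ lw G.edgeFinset ∧ lw G.edgeFinset ≤ pw G + 1 :=
  ⟨pw_le_lw G h, lw_le_pw_add_one G⟩
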